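/- Let N be odd, a and b binary sequences of period N, and v the 4-column interleaved sequence of period 4N with columns (a, b, L^{(N+1)/2}(ā), L^{(N+1)/2}(b)), i.e., v(4i)=a(i), v(4i+1)=b(i), v(4i+2)=ā(i+(N+1)/2), v(4i+3)=b(i+(N+1)/2). Write τ = 4τ₁+τ₂ with 0 ≤ τ₂ ≤ 3. Then R_v(τ) = 2R_a(τ₁)+2R_b(τ₁) if τ₂=0; R_v(τ)=0 if τ₂ ∈ {1,3}; and R_v(τ) = -2R_a(τ₁+(N+1)/2)+2R_b(τ₁+(N+1)/2) if τ₂=2. -/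

import Mathlib

/-- Periodic cross-correlation of binary sequences of period `M`. -/
def corr (M : ℕ) (x y : ZMod M → ZMod 2) (τ : ZMod M) : ℤ :=
  ∑ t ∈ Finset.range M, (-1 : ℤ) ^ ((x (t : ZMod M)).val + (y ((t : ZMod M) + τ)).val)

/-- 4-column interleaving: `v(4i+j)` is the `j`-th column evaluated at `i`. -/
def il4 (N : ℕ) (a b c d : ZMod N → ZMod 2) : ZMod (4 * N) → ZMod 2 :=
  fun t => if t.val % 4 = 0 then a ((t.val / 4 : ℕ) : ZMod N)
           else if t.val % 4 = 1 then b ((t.val / 4 : ℕ) : ZMod N)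
           else if t.val % 4 = 2 then c ((t.val / 4 : ℕ) : ZMod N)
           else d ((t.val / 4 : ℕ) : ZMod N)

def col (N : ℕ) (a b c d : ZMod N → ZMod 2) : ℕ → ZMod N → ZMod 2 :=
  fun j => if j = 0 then a else if j = 1 then b else if j = 2 then c else d

lemma il4_int (N : ℕ) (hN : 0 < N) (a b c d : ZMod N → ZMod 2) (m : ℤ) (r : ℕ)
    (hr : r < 4) :
    il4 N a b c d (((4 * m + r : ℤ)) : ZMod (4 * N)) = col N a b c d r ((m : ZMod N)) := by
  haveI : NeZero (4 * N) := ⟨by omega⟩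
  set w : ZMod (4 * N) := ((4 * m + r : ℤ) : ZMod (4 * N)) with hw
  have hval : (w.val : ℤ) = (4 * m + r) % (4 * N) := ZMod.val_intCast _
  set k : ℤ := (4 * m + (r : ℤ)) / (4 * N) with hkdef
  have hval' : (w.val : ℤ) = 4 * m + r - 4 * (N * k) := by
    rw [hval, Int.emod_def]; ring
  have hmod : w.val % 4 = r := by omega
  set u : ℕ := w.val / 4 with hu
  have hwu : w.val = 4 * u + r := by omega
  have hdiv : ((u : ℕ) : ZMod N) = (m : ZMod N) := by
    have hwu' : (w.val : ℤ) = 4 * u + r := by exact_mod_cast hwu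
    have h1 : (u : ℤ) - m = N * (-k) := by rw [mul_neg]; linarith
    have h2 : (((u : ℤ) - m : ℤ) : ZMod N) = 0 :=
      (ZMod.intCast_zmod_eq_zero_iff_dvd _ N).mpr ⟨-k, h1⟩
    push_cast at h2
    linear_combination h2
  rw [il4, hmod, ← hu, hdiv, col]
  interval_cases r <;> simp

lemma corr_il4_decomp (N : ℕ) (hN : 0 < N) (a b c d : ZMod N → ZMod 2)
    (τ₁ : ℤ) (τ₂ : ℕ) (hτ₂ : τ₂ < 4) :
    corr (4 * N) (il4 N a b c d) (il4 N a b c d) ((4 * τ₁ + τ₂ : ℤ) : ZMod (4 * N)) =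
      ∑ j ∈ Finset.range 4,
        corr N (col N a b c d j) (col N a b c d ((j + τ₂) % 4))
          ((τ₁ : ZMod N) + (((j + τ₂) / 4 : ℕ) : ZMod N)) := by
  simp only [corr]
  rw [← Finset.sum_product']
  refine Finset.sum_nbij' (fun t => (t % 4, t / 4)) (fun p => 4 * p.2 + p.1) ?_ ?_ ?_ ?_ ?_
  · intro t ht
    simp only [Finset.mem_range, Finset.mem_product] at *
    omega
  · intro p hp
    simp only [Finset.mem_range, Finset.mem_product] at *
    omega
  · intro t ht; simp only; omega
  · intro p hp
    simp only [Finset.mem_range, Finset.mem_product] at hp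
    have : (4 * p.2 + p.1) % 4 = p.1 := by omega
    have : (4 * p.2 + p.1) / 4 = p.2 := by omega
    simp_all
    exact Prod.ext (Nat.mod_eq_of_lt hp.1) rfl
  · intro t ht
    simp only [Finset.mem_range] at ht
    simp only
    set j := t % 4 with hj
    set i := t / 4 with hi
    have hj4 : j < 4 := by omega
    have ht4 : t = 4 * i + j := by omega
    have e1 : ((t : ℕ) : ZMod (4 * N)) = ((4 * (i : ℤ) + j : ℤ) : ZMod (4 * N)) := by
      push_cast [ht4]; ring
    set q : ℕ := (j + τ₂) / 4 with hq
    set r : ℕ := (j + τ₂) % 4 with hrr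
    have hr4 : r < 4 := by omega
    have e2 : ((t : ℕ) : ZMod (4 * N)) + ((4 * τ₁ + τ₂ : ℤ) : ZMod (4 * N)) =
        ((4 * ((i : ℤ) + τ₁ + q) + r : ℤ) : ZMod (4 * N)) := by
      rw [e1, ← Int.cast_add]
      congr 1
      omega
    rw [e2, e1, il4_int N hN a b c d _ j hj4, il4_int N hN a b c d _ r hr4]
    have e4 : (((i : ℤ) + τ₁ + q : ℤ) : ZMod N) =
        (((i : ℕ) : ZMod N) + ((τ₁ : ZMod N) + ((q : ℕ) : ZMod N))) := by
      push_cast; ring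
    rw [e4]
    push_cast
    ring_nf

lemma corr_eq_univ (N : ℕ) [NeZero N] (x y : ZMod N → ZMod 2) (σ : ZMod N) :
    corr N x y σ = ∑ t : ZMod N, (-1 : ℤ) ^ ((x t).val + (y (t + σ)).val) := by
  rw [corr]
  refine Finset.sum_nbij' (fun t => ((t : ℕ) : ZMod N)) (fun z => z.val) ?_ ?_ ?_ ?_ ?_
  · intro t _; exact Finset.mem_univ _
  · intro z _; exact Finset.mem_range.mpr z.val_lt
  · intro t ht
    exact ZMod.val_natCast_of_lt (Finset.mem_range.mp ht)
  · intro z _; simp [ZMod.natCast_val, ZMod.cast_id]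
  · intro t _; rfl

lemma corr_shift_right (N : ℕ) (x y : ZMod N → ZMod 2) (s σ : ZMod N) :
    corr N x (fun i => y (i + s)) σ = corr N x y (σ + s) := by
  unfold corr
  refine Finset.sum_congr rfl fun t _ => ?_
  simp only [add_assoc]

lemma corr_shift_both (N : ℕ) [NeZero N] (x y : ZMod N → ZMod 2) (s σ : ZMod N) :
    corr N (fun i => x (i + s)) (fun i => y (i + s)) σ = corr N x y σ := by
  rw [corr_eq_univ, corr_eq_univ]
  refine Fintype.sum_equiv (Equiv.addRight s) _ _ fun t => ?_
  simp only [Equiv.coe_addRight]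
  ring_nf

lemma corr_shift_left (N : ℕ) [NeZero N] (x y : ZMod N → ZMod 2) (s σ : ZMod N) :
    corr N (fun i => x (i + s)) y σ = corr N x y (σ - s) := by
  have h := corr_shift_both N x (fun i => y (i - s)) s σ
  simp only [add_sub_cancel_right] at h
  rw [h]
  have h2 := corr_shift_right N x (fun i => y (i - s)) s (σ - s)
  simp only [sub_add_cancel] at h2
  rw [← h2]
  simp only [corr, add_sub_cancel_right]

lemma sign_flip (u : ZMod 2) : (-1 : ℤ) ^ (1 - u).val = -(-1 : ℤ) ^ u.val := by
  revert u; decide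

lemma corr_neg_right (N : ℕ) (x y : ZMod N → ZMod 2) (σ : ZMod N) :
    corr N x (fun i => 1 - y i) σ = -corr N x y σ := by
  unfold corr
  rw [← Finset.sum_neg_distrib]
  refine Finset.sum_congr rfl fun t _ => ?_
  rw [pow_add, pow_add, sign_flip]
  ring

lemma corr_neg_left (N : ℕ) (x y : ZMod N → ZMod 2) (σ : ZMod N) :
    corr N (fun i => 1 - x i) y σ = -corr N x y σ := by
  unfold corr
  rw [← Finset.sum_neg_distrib]
  refine Finset.sum_congr rfl fun t _ => ?_
  rw [pow_add, pow_add, sign_flip]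
  ring

section combos
variable (N : ℕ) [NeZero N] (x y : ZMod N → ZMod 2) (s σ : ZMod N)

lemma combA : corr N x (fun i => 1 - y (i + s)) σ = -corr N x y (σ + s) := by
  rw [corr_neg_right N x (fun i => y (i + s)) σ, corr_shift_right]

lemma combB : corr N (fun i => 1 - x (i + s)) y σ = -corr N x y (σ - s) := by
  rw [corr_neg_left N (fun i => x (i + s)) y σ, corr_shift_left]

lemma combC : corr N (fun i => 1 - x (i + s)) (fun i => 1 - y (i + s)) σ = corr N x y σ := by
  rw [corr_neg_left N (fun i => x (i + s)) _ σ,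
    corr_neg_right N (fun i => x (i + s)) (fun i => y (i + s)) σ, corr_shift_both, neg_neg]

lemma combG : corr N (fun i => 1 - x (i + s)) (fun i => y (i + s)) σ = -corr N x y σ := by
  rw [corr_neg_left N (fun i => x (i + s)) _ σ, corr_shift_both]

lemma combH : corr N (fun i => x (i + s)) (fun i => 1 - y (i + s)) σ = -corr N x y σ := by
  rw [corr_neg_right N (fun i => x (i + s)) (fun i => y (i + s)) σ, corr_shift_both]

end combos

theorem stmt_13 (N : ℕ) (hN : Odd N) (a b : ZMod N → ZMod 2)
    (v : ZMod (4 * N) → ZMod 2)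
    (hv : v = il4 N a b (fun i => 1 - a (i + (((N + 1) / 2 : ℕ) : ZMod N)))
                        (fun i => b (i + (((N + 1) / 2 : ℕ) : ZMod N))))
    (τ τ₁ : ℤ) (τ₂ : ℤ) (hτ : τ = 4 * τ₁ + τ₂) (hτ₂ : 0 ≤ τ₂ ∧ τ₂ ≤ 3) :
    (τ₂ = 0 →
      corr (4 * N) v v (τ : ZMod (4 * N)) =
        2 * corr N a a (τ₁ : ZMod N) + 2 * corr N b b (τ₁ : ZMod N)) ∧
    ((τ₂ = 1 ∨ τ₂ = 3) → corr (4 * N) v v (τ : ZMod (4 * N)) = 0) ∧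
    (τ₂ = 2 →
      corr (4 * N) v v (τ : ZMod (4 * N)) =
        -2 * corr N a a ((τ₁ : ZMod N) + (((N + 1) / 2 : ℕ) : ZMod N)) +
          2 * corr N b b ((τ₁ : ZMod N) + (((N + 1) / 2 : ℕ) : ZMod N))) := by
  obtain ⟨k, hk⟩ := hN
  have hN0 : 0 < N := by omega
  haveI : NeZero N := ⟨by omega⟩
  have hs : (((N + 1) / 2 : ℕ) : ZMod N) + (((N + 1) / 2 : ℕ) : ZMod N) = 1 := by
    rw [← Nat.cast_add]
    have h2 : (N + 1) / 2 + (N + 1) / 2 = N + 1 := by omega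
    rw [h2]
    push_cast [ZMod.natCast_self]
    ring
  set s : ZMod N := (((N + 1) / 2 : ℕ) : ZMod N) with hsdef
  have h1s : ∀ σ : ZMod N, σ + 1 - s = σ + s := by
    intro σ; rw [← hs]; ring
  refine ⟨?_, ?_, ?_⟩
  · intro h0
    have hcast : ((τ : ℤ) : ZMod (4 * N)) = ((4 * τ₁ + ((0 : ℕ) : ℤ) : ℤ) : ZMod (4 * N)) := by
      rw [hτ, h0]; norm_num
    rw [hv, hcast, corr_il4_decomp N hN0 _ _ _ _ τ₁ 0 (by norm_num)]
    simp only [Finset.sum_range_succ, Finset.sum_range_zero]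
    norm_num [col]
    rw [combC, corr_shift_both]
    ring
  · rintro (h0 | h0)
    · have hcast : ((τ : ℤ) : ZMod (4 * N)) = ((4 * τ₁ + ((1 : ℕ) : ℤ) : ℤ) : ZMod (4 * N)) := by
        rw [hτ, h0]; norm_num
      rw [hv, hcast, corr_il4_decomp N hN0 _ _ _ _ τ₁ 1 (by norm_num)]
      simp only [Finset.sum_range_succ, Finset.sum_range_zero]
      norm_num [col]
      rw [combA, combG, corr_shift_left, h1s]
      ring
    · have hcast : ((τ : ℤ) : ZMod (4 * N)) = ((4 * τ₁ + ((3 : ℕ) : ℤ) : ℤ) : ZMod (4 * N)) := by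
        rw [hτ, h0]; norm_num
      rw [hv, hcast, corr_il4_decomp N hN0 _ _ _ _ τ₁ 3 (by norm_num)]
      simp only [Finset.sum_range_succ, Finset.sum_range_zero]
      norm_num [col]
      rw [corr_shift_right, combB, combH, h1s]
      ring
  · intro h0
    have hcast : ((τ : ℤ) : ZMod (4 * N)) = ((4 * τ₁ + ((2 : ℕ) : ℤ) : ℤ) : ZMod (4 * N)) := by
      rw [hτ, h0]; norm_num
    rw [hv, hcast, corr_il4_decomp N hN0 _ _ _ _ τ₁ 2 (by norm_num)]
    simp only [Finset.sum_range_succ, Finset.sum_range_zero]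
    norm_num [col]
    rw [combA, corr_shift_right, combB, corr_shift_left, h1s]
    ring
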